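/- arXiv:1803.07429 — 2 statements merged into one kernel-verified Lean document; each statement's English description precedes it below -/
import Mathlib

section
/- Let D be a bounded domain in the plane and let A ⊆ D be measurable. For any bounded measurable function ω on D with 0 ≤ ω ≤ μ almost everywhere and ∫_D ω = 1, and any x ∈ ℝ², one has ∫_{B_{Rε}(x)} log(ε/|x−y|) ω(y) dy ≤ 1/2, where ε > 0 satisfies μπε² = 1 and R ≥ 1. -/
open MeasureTheory Real

abbrev Plane := EuclideanSpace ℝ (Fin 2)

section Aux

open Set ENNReal

/-- The radial majorant. -/
noncomputable def Fm (μ ε : ℝ) : ℝ → ℝ := fun r => μ * max (Real.log (ε / r)) 0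

lemma Fm_meas (μ ε : ℝ) : Measurable (Fm μ ε) :=
  measurable_const.mul ((Real.measurable_log.comp (measurable_const.div measurable_id)).max
    measurable_const)

lemma Fm_nonneg {μ : ℝ} (hμ : 0 ≤ μ) (ε r : ℝ) : 0 ≤ Fm μ ε r :=
  mul_nonneg hμ (le_max_right _ _)

lemma Fm_eq_zero {μ ε r : ℝ} (hε : 0 < ε) (hr : ε < r) : Fm μ ε r = 0 := by
  have h0 : 0 < r := hε.trans hr
  have : Real.log (ε / r) ≤ 0 :=
    Real.log_nonpos (by positivity) ((div_le_one h0).2 hr.le)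
  simp [Fm, max_eq_right this]

lemma aux_interval {ε : ℝ} (hε : 0 < ε) :
    ∫ y in (0:ℝ)..ε, (y * Real.log ε - y * Real.log y) = ε ^ 2 / 4 := by
  have hcont : Continuous fun y : ℝ => y * Real.log ε - y * Real.log y :=
    (continuous_id.mul continuous_const).sub Real.continuous_mul_log
  set Φ : ℝ → ℝ := fun y => y ^ 2 / 2 * Real.log ε - y * (y * Real.log y) / 2 + y ^ 2 / 4
    with hΦ
  have hΦc : Continuous Φ := by
    apply Continuous.add
    · exact (((continuous_pow 2).div_const 2).mul continuous_const).sub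
        ((continuous_id.mul Real.continuous_mul_log).div_const 2)
    · exact (continuous_pow 2).div_const 4
  have key : ∀ y ∈ Ioo (0:ℝ) ε, HasDerivAt Φ (y * Real.log ε - y * Real.log y) y := by
    intro y hy
    have A : HasDerivAt (fun y : ℝ => y * Real.log y) (Real.log y + 1) y :=
      Real.hasDerivAt_mul_log hy.1.ne'
    have B : HasDerivAt (fun y : ℝ => y * (y * Real.log y))
        (1 * (y * Real.log y) + y * (Real.log y + 1)) y := (hasDerivAt_id y).mul A
    have C : HasDerivAt (fun y : ℝ => y ^ 2) ((2:ℕ) * y ^ 1) y := hasDerivAt_pow 2 y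
    have := (((C.div_const 2).mul_const (Real.log ε)).sub (B.div_const 2)).add (C.div_const 4)
    refine this.congr_deriv ?_
    push_cast
    ring
  rw [intervalIntegral.integral_eq_sub_of_hasDeriv_right_of_le hε.le hΦc.continuousOn
      (fun y hy => (key y hy).hasDerivWithinAt) (hcont.intervalIntegrable _ _)]
  simp only [hΦ]
  ring

lemma aux_Ioc {ε : ℝ} (hε : 0 < ε) :
    ∫ y in Ioc (0:ℝ) ε, y * Real.log (ε / y) = ε ^ 2 / 4 := by
  rw [← intervalIntegral.integral_of_le hε.le]
  rw [show (∫ y in (0:ℝ)..ε, y * Real.log (ε / y))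
      = ∫ y in (0:ℝ)..ε, (y * Real.log ε - y * Real.log y) from
    intervalIntegral.integral_congr_ae ?_]
  · exact aux_interval hε
  · refine Filter.Eventually.of_forall fun y hy => ?_
    rw [Set.uIoc_of_le hε.le] at hy
    rw [Real.log_div hε.ne' hy.1.ne']
    ring

lemma aux_integrableOn {ε : ℝ} (hε : 0 < ε) :
    IntegrableOn (fun y => y * Real.log (ε / y)) (Ioc (0:ℝ) ε) := by
  have hcont : Continuous fun y : ℝ => y * Real.log ε - y * Real.log y :=
    (continuous_id.mul continuous_const).sub Real.continuous_mul_log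
  refine (hcont.integrableOn_Ioc).congr_fun (fun y hy => ?_) measurableSet_Ioc
  rw [Real.log_div hε.ne' hy.1.ne']
  ring

lemma aux_Ioi {μ ε : ℝ} (hε : 0 < ε) :
    ∫ y in Ioi (0:ℝ), y * Fm μ ε y = μ * (ε ^ 2 / 4) := by
  have hsplit : Ioi (0:ℝ) = Ioc 0 ε ∪ Ioi ε := (Ioc_union_Ioi_eq_Ioi hε.le).symm
  have heq : EqOn (fun y : ℝ => μ * (y * Real.log (ε / y)))
      (fun y : ℝ => y * Fm μ ε y) (Ioc 0 ε) := by
    intro y hy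
    have hmax : max (Real.log (ε / y)) 0 = Real.log (ε / y) :=
      max_eq_left (Real.log_nonneg ((one_le_div hy.1).2 hy.2))
    simp only [Fm, hmax]
    ring
  have hint1 : IntegrableOn (fun y : ℝ => y * Fm μ ε y) (Ioc 0 ε) :=
    IntegrableOn.congr_fun ((aux_integrableOn hε).const_mul μ) heq measurableSet_Ioc
  have hint2 : IntegrableOn (fun y : ℝ => y * Fm μ ε y) (Ioi ε) := by
    refine (integrableOn_zero).congr_fun (fun y hy => ?_) measurableSet_Ioi
    simp [Fm_eq_zero hε hy]
  rw [hsplit, setIntegral_union (Ioc_disjoint_Ioi le_rfl) measurableSet_Ioi hint1 hint2]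
  have h2 : ∫ y in Ioi ε, y * Fm μ ε y = 0 := by
    refine setIntegral_eq_zero_of_forall_eq_zero fun y hy => ?_
    simp [Fm_eq_zero hε hy]
  have h1 : ∫ y in Ioc (0:ℝ) ε, y * Fm μ ε y
      = ∫ y in Ioc (0:ℝ) ε, μ * (y * Real.log (ε / y)) :=
    (setIntegral_congr_fun measurableSet_Ioc heq).symm
  rw [h2, h1, integral_const_mul, aux_Ioc hε]
  ring

lemma vol_ball_plane : volume (Metric.ball (0 : Plane) 1) = ENNReal.ofReal π := by
  rw [EuclideanSpace.volume_ball]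
  have : Real.Gamma ((Fintype.card (Fin 2)) / 2 + 1) = 1 := by
    norm_num [Real.Gamma_two]
  rw [this]
  norm_num [Real.sq_sqrt Real.pi_nonneg]

lemma plane_integral {μ ε : ℝ} (hε : 0 < ε) :
    ∫ y : Plane, Fm μ ε ‖y‖ = μ * (π * ε ^ 2) / 2 := by
  rw [MeasureTheory.integral_fun_norm_addHaar (volume : Measure Plane) (Fm μ ε)]
  rw [finrank_euclideanSpace_fin, measureReal_def, vol_ball_plane]
  rw [ENNReal.toReal_ofReal Real.pi_nonneg]
  have : ∀ y : ℝ, y ^ (2 - 1) • Fm μ ε y = y * Fm μ ε y := by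
    intro y; simp [smul_eq_mul]
  simp only [this, nsmul_eq_mul, smul_eq_mul]
  rw [aux_Ioi hε]
  ring

lemma plane_lintegral {f : ℝ → ℝ≥0∞} (hf : Measurable f) :
    ∫⁻ x : Plane, f ‖x‖ =
      (2 * volume (Metric.ball (0 : Plane) 1)) * ∫⁻ y in Ioi (0:ℝ), ENNReal.ofReal (y ^ 1) * f y := by
  have h0 := lintegral_subtype_comap (μ := (volume : Measure Plane))
    (measurableSet_singleton (0:Plane)).compl (fun a => f ‖a‖)
  rw [MeasureTheory.restrict_compl_singleton] at h0
  have hmp := Measure.measurePreserving_homeomorphUnitSphereProd (volume : Measure Plane)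
  have hg : Measurable fun p : (Metric.sphere (0:Plane) 1) × (Ioi (0:ℝ)) => f p.2 :=
    hf.comp (measurable_subtype_coe.comp measurable_snd)
  have h2 : ∫⁻ y : Ioi (0:ℝ), f y ∂(Measure.volumeIoiPow (Module.finrank ℝ Plane - 1))
      = ∫⁻ y in Ioi (0:ℝ), ENNReal.ofReal (y ^ 1) * f y := by
    rw [Measure.volumeIoiPow]
    rw [lintegral_withDensity_eq_lintegral_mul _
      ((measurable_subtype_coe.pow_const _).ennreal_ofReal)
      (show Measurable fun y : Ioi (0:ℝ) => f ↑y from hf.comp measurable_subtype_coe)]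
    rw [finrank_euclideanSpace_fin]
    simp only [Pi.mul_apply]
    exact lintegral_subtype_comap measurableSet_Ioi
      (fun y => ENNReal.ofReal (y ^ 1) * f y)
  calc ∫⁻ x : Plane, f ‖x‖
      = ∫⁻ x : ({(0:Plane)}ᶜ : Set Plane), f ‖x.1‖
        ∂((volume : Measure Plane).comap (↑)) := h0.symm
    _ = ∫⁻ p, f p.2
        ∂((volume : Measure Plane).toSphere.prod
          (Measure.volumeIoiPow (Module.finrank ℝ Plane - 1))) :=
        by rw [← hmp.lintegral_comp hg]; simp only [homeomorphUnitSphereProd_apply_snd_coe]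
    _ = ∫⁻ _ : Metric.sphere (0:Plane) 1,
          (∫⁻ y : Ioi (0:ℝ), f y ∂(Measure.volumeIoiPow (Module.finrank ℝ Plane - 1)))
          ∂(volume : Measure Plane).toSphere := lintegral_prod _ hg.aemeasurable
    _ = ((volume : Measure Plane).toSphere Set.univ)
          * ∫⁻ y in Ioi (0:ℝ), ENNReal.ofReal (y ^ 1) * f y := by
        rw [lintegral_const, h2]; ring
    _ = 2 * volume (Metric.ball (0 : Plane) 1)
          * ∫⁻ y in Ioi (0:ℝ), ENNReal.ofReal (y ^ 1) * f y := by
        rw [Measure.toSphere_apply_univ, finrank_euclideanSpace_fin]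
        norm_num

lemma Fm_integrable {μ ε : ℝ} (hμ : 0 ≤ μ) (hε : 0 < ε) :
    Integrable fun y : Plane => Fm μ ε ‖y‖ := by
  refine ⟨((Fm_meas μ ε).comp measurable_norm).aestronglyMeasurable, ?_⟩
  rw [hasFiniteIntegral_iff_ofReal (Filter.Eventually.of_forall fun y => Fm_nonneg hμ _ _)]
  rw [plane_lintegral ((Fm_meas μ ε).ennreal_ofReal)]
  refine ENNReal.mul_lt_top (ENNReal.mul_lt_top (by norm_num) measure_ball_lt_top) ?_
  calc ∫⁻ y in Ioi (0:ℝ), ENNReal.ofReal (y ^ 1) * ENNReal.ofReal (Fm μ ε y)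
      ≤ ∫⁻ y in Ioi (0:ℝ), (Ioc (0:ℝ) ε).indicator (fun _ => ENNReal.ofReal (μ * ε)) y := by
        refine setLIntegral_mono (measurable_const.indicator measurableSet_Ioc)
          fun y hy => ?_
        rcases le_or_gt y ε with h | h
        · have hy0 : 0 < y := hy
          rw [Set.indicator_of_mem (Set.mem_Ioc.2 ⟨hy0, h⟩)]
          rw [← ENNReal.ofReal_mul (by positivity)]
          refine ENNReal.ofReal_le_ofReal ?_
          have hmax : max (Real.log (ε / y)) 0 ≤ ε / y := by
            refine max_le ?_ (by positivity)
            have := Real.log_le_sub_one_of_pos (show (0:ℝ) < ε / y by positivity)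
            linarith
          have : y ^ 1 * Fm μ ε y ≤ y * (μ * (ε / y)) := by
            simp only [pow_one, Fm]
            exact mul_le_mul_of_nonneg_left (mul_le_mul_of_nonneg_left hmax hμ) hy0.le
          calc y ^ 1 * Fm μ ε y ≤ y * (μ * (ε / y)) := this
            _ = μ * ε := by field_simp
        · rw [Fm_eq_zero hε h]
          simp
    _ < ⊤ := by
        rw [lintegral_indicator measurableSet_Ioc, setLIntegral_const]
        refine ENNReal.mul_lt_top ENNReal.ofReal_lt_top ?_
        rw [Measure.restrict_apply measurableSet_Ioc]
        exact lt_of_le_of_lt (measure_mono Set.inter_subset_left) measure_Ioc_lt_top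

end Aux

/-- For any bounded measurable `ω` on a bounded measurable `D ⊆ ℝ²` with
`0 ≤ ω ≤ μ` a.e. and `∫_D ω = 1`, and any `x ∈ ℝ²`,
`∫_{B_{Rε}(x)} log (ε/|x-y|) ω(y) dy ≤ 1/2`, where `μπε² = 1` and `R ≥ 1`. -/
theorem stmt0 (D A : Set Plane) (hD : MeasurableSet D) (hDb : Bornology.IsBounded D)
    (hA : MeasurableSet A) (hAD : A ⊆ D)
    (μ ε R : ℝ) (hμ : 0 < μ) (hε : 0 < ε) (hεμ : μ * (π * ε ^ 2) = 1) (hR : 1 ≤ R)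
    (ω : Plane → ℝ) (hmeas : Measurable ω)
    (hbound : ∀ᵐ y ∂(volume.restrict D), 0 ≤ ω y ∧ ω y ≤ μ)
    (hmass : ∫ y in D, ω y = 1)
    (x : Plane)
    (hint : IntegrableOn (fun y => Real.log (ε / ‖x - y‖) * ω y)
      (D ∩ Metric.ball x (R * ε))) :
    ∫ y in D ∩ Metric.ball x (R * ε), Real.log (ε / ‖x - y‖) * ω y ≤ 1 / 2 := by
  set g : Plane → ℝ := fun y => Fm μ ε ‖x - y‖ with hg
  have hgint : Integrable g :=
    (integrable_comp_sub_left (fun y : Plane => Fm μ ε ‖y‖) x).2 (Fm_integrable hμ.le hε)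
  have hbound' : ∀ᵐ y ∂(volume.restrict (D ∩ Metric.ball x (R * ε))), 0 ≤ ω y ∧ ω y ≤ μ :=
    ae_restrict_of_ae_restrict_of_subset Set.inter_subset_left hbound
  have hae : ∀ᵐ y ∂(volume.restrict (D ∩ Metric.ball x (R * ε))),
      Real.log (ε / ‖x - y‖) * ω y ≤ g y := by
    filter_upwards [hbound'] with y hy
    set L := Real.log (ε / ‖x - y‖) with hL
    have hmaxL : L ≤ max L 0 := le_max_left _ _
    have hmax0 : (0:ℝ) ≤ max L 0 := le_max_right _ _
    rcases le_or_gt 0 L with h | h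
    · have : L * ω y ≤ L * μ := mul_le_mul_of_nonneg_left hy.2 h
      calc L * ω y ≤ L * μ := this
        _ ≤ max L 0 * μ := mul_le_mul_of_nonneg_right hmaxL hμ.le
        _ = g y := by simp only [hg, Fm]; ring
    · have h1 : L * ω y ≤ 0 := mul_nonpos_of_nonpos_of_nonneg h.le hy.1
      have h2 : (0:ℝ) ≤ g y := Fm_nonneg hμ.le _ _
      linarith
  calc ∫ y in D ∩ Metric.ball x (R * ε), Real.log (ε / ‖x - y‖) * ω y
      ≤ ∫ y in D ∩ Metric.ball x (R * ε), g y := integral_mono_ae hint hgint.integrableOn hae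
    _ ≤ ∫ y, g y := setIntegral_le_integral hgint
        (Filter.Eventually.of_forall fun y => Fm_nonneg hμ.le _ _)
    _ = ∫ y : Plane, Fm μ ε ‖y‖ := integral_sub_left_eq_self (fun y : Plane => Fm μ ε ‖y‖) volume x
    _ = μ * (π * ε ^ 2) / 2 := plane_integral hε
    _ = 1 / 2 := by rw [hεμ]
end

section
/- Let μ ≥ 1 and let ω be a measurable function on a bounded measurable set D ⊂ ℝ² with 0 ≤ ω ≤ μ a.e. and ∫_D ω = 1. Suppose that for some point x ∈ ℝ² and constant C > 0, ∫_D log(ε/|x−y|) ω(y) dy ≥ −C, where μπε² = 1. Then for every R > 1, ∫_{D \ B_{Rε}(x)} ω(y) dy ≤ (C + 1/2)/log R. -/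
open MeasureTheory Real Set

lemma plane_vol_ball (x : Plane) (r : ℝ) (hr : 0 ≤ r) :
    volume (Metric.ball x r) = ENNReal.ofReal (π * r ^ 2) := by
  rw [EuclideanSpace.volume_ball]
  have : Fintype.card (Fin 2) = 2 := by simp
  rw [this, show ((2:ℕ):ℝ) / 2 + 1 = 2 by norm_num, Real.Gamma_two, Real.sq_sqrt pi_nonneg,
    ← ENNReal.ofReal_pow hr, ← ENNReal.ofReal_mul (by positivity)]
  ring_nf

lemma exp_int : (∫ t in Ioi (0:ℝ), Real.exp (-(2*t))) = 2⁻¹ := by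
  have := integral_comp_mul_left_Ioi (fun x : ℝ => Real.exp (-x)) 0 (two_pos (α := ℝ))
  simp only [mul_zero] at this
  rw [this, integral_exp_neg_Ioi_zero]
  norm_num

/-- The key radial computation: `∫⁻ max (log (ε/‖x-y‖)) 0 = π ε² / 2`. -/
lemma key_lintegral (x : Plane) (ε : ℝ) (hε : 0 < ε) :
    (∫⁻ y, ENNReal.ofReal (max (Real.log (ε / ‖x - y‖)) 0)) =
      ENNReal.ofReal (π * ε ^ 2) * ENNReal.ofReal 2⁻¹ := by
  have hfm : Measurable fun y : Plane => max (Real.log (ε / ‖x - y‖)) 0 :=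
    ((Real.measurable_log.comp
      (measurable_const.div ((measurable_const.sub measurable_id).norm))).max measurable_const)
  have key := lintegral_eq_lintegral_meas_lt (f := fun y : Plane => max (Real.log (ε / ‖x - y‖)) 0)
      volume (Filter.Eventually.of_forall fun y => le_max_right _ _) hfm.aemeasurable
  rw [key]
  have hset : ∀ t ∈ Ioi (0:ℝ),
      volume {y : Plane | t < max (Real.log (ε / ‖x - y‖)) 0} =
        ENNReal.ofReal (π * ε ^ 2 * Real.exp (-(2 * t))) := by
    intro t ht
    have ht : (0:ℝ) < t := ht
    have hset2 : {y : Plane | t < max (Real.log (ε / ‖x - y‖)) 0} =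
        Metric.ball x (ε * Real.exp (-t)) \ {x} := by
      ext y
      simp only [mem_setOf_eq, mem_diff, Metric.mem_ball, mem_singleton_iff]
      constructor
      · intro hy
        rcases lt_max_iff.1 hy with hy' | hy'
        swap
        · linarith
        have hxy0 : ‖x - y‖ ≠ 0 := by
          intro h0; rw [h0, div_zero, Real.log_zero] at hy'; linarith
        have hnorm : 0 < ‖x - y‖ := (norm_nonneg _).lt_of_ne' hxy0
        have hz : 0 < ε / ‖x - y‖ := div_pos hε hnorm
        have hxy : y ≠ x := by
          intro hcase; rw [hcase, sub_self, norm_zero] at hxy0; exact hxy0 rfl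
        have hlt : Real.exp t < ε / ‖x - y‖ := by
          calc Real.exp t < Real.exp (Real.log (ε / ‖x - y‖)) := Real.exp_lt_exp.2 hy'
            _ = ε / ‖x - y‖ := Real.exp_log hz
        have h3 : Real.exp t * ‖x - y‖ < ε := (lt_div_iff₀ hnorm).1 hlt
        refine ⟨?_, hxy⟩
        rw [dist_eq_norm, norm_sub_rev, Real.exp_neg, ← div_eq_mul_inv]
        exact (lt_div_iff₀ (Real.exp_pos t)).2 (by linarith)
      · rintro ⟨hb, hne⟩
        have hnorm : 0 < ‖x - y‖ := by
          rw [norm_pos_iff, sub_ne_zero]; exact fun h => hne h.symm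
        rw [dist_eq_norm, norm_sub_rev, Real.exp_neg, ← div_eq_mul_inv] at hb
        have h1 : ‖x - y‖ * Real.exp t < ε := (lt_div_iff₀ (Real.exp_pos t)).1 hb
        have h2 : Real.exp t < ε / ‖x - y‖ := (lt_div_iff₀ hnorm).2 (by linarith)
        have hlt : t < Real.log (ε / ‖x - y‖) := by
          calc t = Real.log (Real.exp t) := (Real.log_exp t).symm
            _ < Real.log (ε / ‖x - y‖) := Real.log_lt_log (Real.exp_pos t) h2
        exact hlt.trans_le (le_max_left _ _)
    rw [hset2, measure_diff_null (measure_singleton x),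
      plane_vol_ball x _ (by positivity), mul_pow, ← Real.exp_nat_mul]
    ring_nf
  rw [setLIntegral_congr_fun measurableSet_Ioi hset]
  have : ∀ t : ℝ, ENNReal.ofReal (π * ε ^ 2 * Real.exp (-(2 * t))) =
      ENNReal.ofReal (π * ε ^ 2) * ENNReal.ofReal (Real.exp (-(2 * t))) := fun t => by
    rw [← ENNReal.ofReal_mul (by positivity)]
  simp_rw [this]
  rw [lintegral_const_mul' _ _ ENNReal.ofReal_ne_top,
    ← ofReal_integral_eq_lintegral_ofReal
      (by have h := exp_neg_integrableOn_Ioi 0 (two_pos (α := ℝ)); simp at h; exact h)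
      (Filter.Eventually.of_forall fun t => (Real.exp_pos _).le), exp_int]

/-- If `μ ≥ 1`, `0 ≤ ω ≤ μ` a.e. on a bounded measurable `D`, `∫_D ω = 1`, and
`∫_D log(ε/|x-y|) ω(y) dy ≥ -C` with `μπε² = 1`, then for every `R > 1`,
`∫_{D \ B_{Rε}(x)} ω ≤ (C + 1/2)/log R`. -/
theorem stmt2 (D : Set Plane) (hD : MeasurableSet D) (hDb : Bornology.IsBounded D)
    (μ ε : ℝ) (hμ : 1 ≤ μ) (hε : 0 < ε) (hεμ : μ * (π * ε ^ 2) = 1)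
    (ω : Plane → ℝ) (hmeas : Measurable ω)
    (hbound : ∀ᵐ y ∂(volume.restrict D), 0 ≤ ω y ∧ ω y ≤ μ)
    (hmass : ∫ y in D, ω y = 1)
    (x : Plane) (C : ℝ) (hC : 0 < C)
    (hint : IntegrableOn (fun y => Real.log (ε / ‖x - y‖) * ω y) D)
    (hlow : -C ≤ ∫ y in D, Real.log (ε / ‖x - y‖) * ω y)
    (R : ℝ) (hR : 1 < R) :
    ∫ y in D \ Metric.ball x (R * ε), ω y ≤ (C + 1 / 2) / Real.log R := by
  set f : Plane → ℝ := fun y => Real.log (ε / ‖x - y‖) with hf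
  set h : Plane → ℝ := fun y => f y * ω y with hh
  set A : Set Plane := D ∩ Metric.ball x (R * ε) with hA
  set B : Set Plane := D \ Metric.ball x (R * ε) with hB
  have hμ0 : (0:ℝ) < μ := lt_of_lt_of_le one_pos hμ
  have hlogR : 0 < Real.log R := Real.log_pos hR
  -- finiteness of D
  have hDfin : volume D < ⊤ := hDb.measure_lt_top
  have : IsFiniteMeasure (volume.restrict D) :=
    ⟨by rwa [Measure.restrict_apply_univ]⟩
  -- ω is integrable on D
  have hωint : IntegrableOn ω D := by
    refine Integrable.mono' (integrable_const μ) hmeas.aestronglyMeasurable ?_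
    filter_upwards [hbound] with y hy
    rw [Real.norm_eq_abs, abs_of_nonneg hy.1]; exact hy.2
  have hωA : IntegrableOn ω A := hωint.mono_set inter_subset_left
  have hωB : IntegrableOn ω B := hωint.mono_set diff_subset
  have hhA : IntegrableOn h A := hint.mono_set inter_subset_left
  have hhB : IntegrableOn h B := hint.mono_set diff_subset
  set m : ℝ := ∫ y in B, ω y with hm
  -- m ≥ 0
  have hboundB : ∀ᵐ y ∂(volume.restrict B), 0 ≤ ω y ∧ ω y ≤ μ :=
    ae_restrict_of_ae_restrict_of_subset diff_subset hbound
  have hboundA : ∀ᵐ y ∂(volume.restrict A), 0 ≤ ω y ∧ ω y ≤ μ :=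
    ae_restrict_of_ae_restrict_of_subset inter_subset_left hbound
  have hm0 : 0 ≤ m := integral_nonneg_of_ae (hboundB.mono fun y hy => hy.1)
  -- split the integral
  have hsplit : ∫ y in D, h y = (∫ y in A, h y) + ∫ y in B, h y :=
    (integral_inter_add_diff measurableSet_ball hint).symm
  -- far part bound
  have hBmeas : MeasurableSet B := hD.diff measurableSet_ball
  have hfar : ∫ y in B, h y ≤ (- Real.log R) * m := by
    have hle : ∀ᵐ y ∂(volume.restrict B), h y ≤ (- Real.log R) * ω y := by
      filter_upwards [hboundB, ae_restrict_mem hBmeas] with y hy hyB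
      have hdist : R * ε ≤ ‖x - y‖ := by
        have := hyB.2
        rw [Metric.mem_ball, dist_eq_norm, norm_sub_rev] at this
        exact not_lt.1 this
      have hnorm : 0 < ‖x - y‖ := lt_of_lt_of_le (by positivity) hdist
      have hfley : f y ≤ - Real.log R := by
        have h1 : ε / ‖x - y‖ ≤ ε / (R * ε) := by
          apply div_le_div_of_nonneg_left hε.le (by positivity) hdist
        have h2 : ε / (R * ε) = R⁻¹ := by rw [mul_comm, ← div_div, div_self hε.ne', one_div]
        calc f y ≤ Real.log (ε / (R * ε)) :=
              Real.log_le_log (by positivity) h1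
          _ = - Real.log R := by rw [h2, Real.log_inv]
      calc h y = f y * ω y := rfl
        _ ≤ (- Real.log R) * ω y := mul_le_mul_of_nonneg_right hfley hy.1
    calc ∫ y in B, h y ≤ ∫ y in B, (- Real.log R) * ω y :=
          integral_mono_ae hhB (hωB.const_mul _) hle
      _ = (- Real.log R) * m := by rw [integral_const_mul]
  -- near part bound
  have hnear : ∫ y in A, h y ≤ 1 / 2 := by
    have hstep1 : ∫ y in A, h y ≤ ∫ y in A, max (h y) 0 :=
      integral_mono hhA hhA.pos_part fun y => le_max_left _ _
    have hstep2 : ∫ y in A, max (h y) 0 =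
        (∫⁻ y in A, ENNReal.ofReal (max (h y) 0)).toReal :=
      integral_eq_lintegral_of_nonneg_ae
        (Filter.Eventually.of_forall fun y => le_max_right _ _)
        hhA.pos_part.aestronglyMeasurable
    have hstep3 : (∫⁻ y in A, ENNReal.ofReal (max (h y) 0)) ≤
        ∫⁻ y in A, ENNReal.ofReal (μ * max (f y) 0) := by
      refine lintegral_mono_ae ?_
      filter_upwards [hboundA] with y hy
      apply ENNReal.ofReal_le_ofReal
      rcases le_total (f y) 0 with hfy | hfy
      · have : h y ≤ 0 := mul_nonpos_of_nonpos_of_nonneg hfy hy.1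
        rw [max_eq_right this]
        positivity
      · refine max_le ?_ (by positivity)
        calc h y = f y * ω y := rfl
          _ ≤ f y * μ := mul_le_mul_of_nonneg_left hy.2 hfy
          _ = μ * f y := mul_comm _ _
          _ ≤ μ * max (f y) 0 := mul_le_mul_of_nonneg_left (le_max_left _ _) hμ0.le
    have hstep4 : (∫⁻ y in A, ENNReal.ofReal (μ * max (f y) 0)) ≤
        ∫⁻ y, ENNReal.ofReal (μ * max (f y) 0) := setLIntegral_le_lintegral _ _
    have hstep5 : (∫⁻ y, ENNReal.ofReal (μ * max (f y) 0)) = ENNReal.ofReal (1/2) := by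
      have : ∀ y : Plane, ENNReal.ofReal (μ * max (f y) 0) =
          ENNReal.ofReal μ * ENNReal.ofReal (max (f y) 0) := fun y => by
        rw [← ENNReal.ofReal_mul hμ0.le]
      simp_rw [this]
      rw [lintegral_const_mul' _ _ ENNReal.ofReal_ne_top, key_lintegral x ε hε,
        ← mul_assoc, ← ENNReal.ofReal_mul hμ0.le, hεμ, ← ENNReal.ofReal_mul one_pos.le]
      norm_num
    have hchain : (∫⁻ y in A, ENNReal.ofReal (max (h y) 0)) ≤ ENNReal.ofReal (1/2) :=
      (hstep3.trans hstep4).trans_eq hstep5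
    calc ∫ y in A, h y ≤ (∫⁻ y in A, ENNReal.ofReal (max (h y) 0)).toReal :=
          hstep1.trans_eq hstep2
      _ ≤ (ENNReal.ofReal (1/2)).toReal := ENNReal.toReal_mono ENNReal.ofReal_ne_top hchain
      _ = 1 / 2 := ENNReal.toReal_ofReal (by norm_num)
  -- combine
  have hcomb : -C ≤ 1 / 2 + (- Real.log R) * m := by
    calc -C ≤ ∫ y in D, h y := hlow
      _ = (∫ y in A, h y) + ∫ y in B, h y := hsplit
      _ ≤ 1 / 2 + (- Real.log R) * m := add_le_add hnear hfar
  show m ≤ (C + 1/2) / Real.log R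
  rw [le_div_iff₀ hlogR]
  nlinarith [hcomb]
end
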